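/- (Boundary characterization of the averaged convex set) Let (g_k)_{k∈S} be a finite family of differentiable convex functions on intervals of ℝ with strictly increasing derivatives, and let λ : S → (0,1] with Σ_k λ(k) = 1. Define the combined set D = {(Σ_k λ(k)x^k, Σ_k λ(k)y^k) : y^k ≥ g_k(x^k) ∀k}. A point (x, y) with x = Σ_k λ(k)x^k and y = Σ_k λ(k)g_k(x^k) lies on the lower boundary of D (i.e., minimizes the second coordinate among points of D with first coordinate x) if and only if g_i'(x^i) = g_j'(x^j) for all i, j ∈ S. -/

import Mathlib

open Finset

/-- Tangent line inequality for a differentiable function with monotone derivative. -/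
lemma tangent_le {g g' : ℝ → ℝ} (hd : ∀ x, HasDerivAt g (g' x) x)
    (hm : Monotone g') (a x : ℝ) : g a + g' a * (x - a) ≤ g x := by
  rcases lt_trichotomy x a with h | h | h
  · obtain ⟨c, hc, hceq⟩ := exists_hasDerivAt_eq_slope g g' h
      (fun z _ => (hd z).continuousAt.continuousWithinAt) (fun z _ => hd z)
    have hca : g' c ≤ g' a := hm hc.2.le
    have hxa : (0:ℝ) < a - x := by linarith
    have : (g a - g x) / (a - x) ≤ g' a := hceq ▸ hca
    rw [div_le_iff₀ hxa] at this
    nlinarith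
  · simp [h]
  · obtain ⟨c, hc, hceq⟩ := exists_hasDerivAt_eq_slope g g' h
      (fun z _ => (hd z).continuousAt.continuousWithinAt) (fun z _ => hd z)
    have hca : g' a ≤ g' c := hm hc.1.le
    have hxa : (0:ℝ) < x - a := by linarith
    have : g' a ≤ (g x - g a) / (x - a) := hceq ▸ hca
    rw [le_div_iff₀ hxa] at this
    nlinarith

/-- If the derivative at 0 is negative, there is a positive point with smaller value. -/
lemma exists_pos_lt_of_deriv_neg {φ : ℝ → ℝ} {d : ℝ} (h : HasDerivAt φ d 0)
    (hd : d < 0) : ∃ t > 0, φ t < φ 0 := by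
  have hs := hasDerivAt_iff_tendsto_slope.mp h
  have ev : ∀ᶠ t in nhdsWithin (0:ℝ) {(0:ℝ)}ᶜ, slope φ 0 t < 0 :=
    hs.eventually (gt_mem_nhds hd)
  have ev' : ∀ᶠ t in nhdsWithin (0:ℝ) (Set.Ioi 0), slope φ 0 t < 0 :=
    ev.filter_mono (nhdsWithin_mono 0 (fun x hx => ne_of_gt hx))
  obtain ⟨t, hslope, ht⟩ := (ev'.and self_mem_nhdsWithin).exists
  refine ⟨t, ht, ?_⟩
  have ht' : (0:ℝ) < t := ht
  have h0 : (φ t - φ 0) / t < 0 := by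
    simpa [slope_def_field, div_eq_inv_mul] using hslope
  by_contra hcon
  exact absurd (div_nonneg (by linarith [not_lt.1 hcon]) ht'.le) (not_le.mpr h0)

/-- Boundary characterization of the averaged convex set: for a finite
family of differentiable convex functions `g k` with strictly increasing derivatives
`g' k`, and a probability distribution `lam` on `S`, a point
`(∑ lam k · xdec k, ∑ lam k · g k (xdec k))` of the combined set `D` lies on the lower
boundary of `D` iff all the slopes `g' k (xdec k)` agree. -/
theorem stmt_12 {S : Type*} [Fintype S] [Nonempty S]
    (g g' : S → ℝ → ℝ)
    (hconv : ∀ k, ConvexOn ℝ Set.univ (g k))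
    (hderiv : ∀ k x, HasDerivAt (g k) (g' k x) x)
    (hstrict : ∀ k, StrictMono (g' k))
    (lam : S → ℝ) (hlam_pos : ∀ k, 0 < lam k) (hlam_sum : ∑ k, lam k = 1)
    (D : Set (ℝ × ℝ))
    (hD : D = {p : ℝ × ℝ | ∃ x y : S → ℝ, (∀ k, g k (x k) ≤ y k) ∧
      p.1 = ∑ k, lam k * x k ∧ p.2 = ∑ k, lam k * y k})
    (xdec : S → ℝ) :
    (∀ p ∈ D, p.1 = ∑ k, lam k * xdec k → ∑ k, lam k * g k (xdec k) ≤ p.2)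
    ↔ (∀ i j : S, g' i (xdec i) = g' j (xdec j)) := by
  classical
  constructor
  · intro hopt
    suffices h : ∀ i j : S, ¬ (g' i (xdec i) < g' j (xdec j)) by
      intro i j
      exact le_antisymm (not_lt.1 (h j i)) (not_lt.1 (h i j))
    intro i j hlt
    have hij : i ≠ j := by
      rintro rfl; exact lt_irrefl _ hlt
    have hli : lam i ≠ 0 := (hlam_pos i).ne'
    have hlj : lam j ≠ 0 := (hlam_pos j).ne'
    set φ : ℝ → ℝ := fun t =>
      lam i * g i (xdec i + t * (lam i)⁻¹) + lam j * g j (xdec j - t * (lam j)⁻¹) with hφ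
    have hdφ : HasDerivAt φ (g' i (xdec i) - g' j (xdec j)) 0 := by
      have h1 : HasDerivAt (fun t : ℝ => xdec i + t * (lam i)⁻¹) ((lam i)⁻¹) 0 := by
        simpa using ((hasDerivAt_id (0:ℝ)).mul_const ((lam i)⁻¹)).const_add (xdec i)
      have h2 : HasDerivAt (fun t : ℝ => xdec j - t * (lam j)⁻¹) (-(lam j)⁻¹) 0 := by
        simpa using ((hasDerivAt_id (0:ℝ)).mul_const ((lam j)⁻¹)).const_sub (xdec j)
      have H1 := ((hderiv i (xdec i + 0 * (lam i)⁻¹)).comp 0 h1).const_mul (lam i)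
      have H2 := ((hderiv j (xdec j - 0 * (lam j)⁻¹)).comp 0 h2).const_mul (lam j)
      have := H1.add H2
      refine this.congr_deriv ?_
      simp only [zero_mul, add_zero, sub_zero]
      field_simp
      ring
    obtain ⟨t, ht, hφt⟩ := exists_pos_lt_of_deriv_neg hdφ (by linarith)
    set xnew : S → ℝ := fun k =>
      if k = i then xdec i + t * (lam i)⁻¹
      else if k = j then xdec j - t * (lam j)⁻¹ else xdec k with hxnew
    have e1 : xnew i = xdec i + t * (lam i)⁻¹ := by simp [hxnew]
    have e2 : xnew j = xdec j - t * (lam j)⁻¹ := by simp [hxnew, hij.symm]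
    have hzero : ∀ (f : S → ℝ), (∀ k, k ≠ i → k ≠ j → f k = 0) →
        ∑ k, f k = f i + f j := by
      intro f hf
      rw [← Finset.sum_subset (Finset.subset_univ ({i, j} : Finset S))
        (by intro k _ hk
            simp only [Finset.mem_insert, Finset.mem_singleton, not_or] at hk
            exact hf k hk.1 hk.2)]
      exact Finset.sum_pair hij
    have sum1 : ∑ k, lam k * xnew k = ∑ k, lam k * xdec k := by
      have h0 : ∑ k, (lam k * xnew k - lam k * xdec k) = 0 := by
        rw [hzero _ (by
          intro k hki hkj
          simp [hxnew, hki, hkj])]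
        rw [e1, e2]
        field_simp
        ring
      rw [Finset.sum_sub_distrib] at h0
      linarith
    have sum2 : ∑ k, lam k * g k (xnew k) =
        ∑ k, lam k * g k (xdec k) + (φ t - φ 0) := by
      have h0 : ∑ k, (lam k * g k (xnew k) - lam k * g k (xdec k)) = φ t - φ 0 := by
        rw [hzero _ (by
          intro k hki hkj
          simp [hxnew, hki, hkj])]
        rw [e1, e2]
        simp [hφ]
        ring
      rw [Finset.sum_sub_distrib] at h0
      linarith [h0]
    have hmem : ((∑ k, lam k * xnew k, ∑ k, lam k * g k (xnew k)) : ℝ × ℝ) ∈ D := by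
      rw [hD]
      exact ⟨xnew, fun k => g k (xnew k), fun k => le_rfl, rfl, rfl⟩
    have := hopt _ hmem sum1
    simp only at this
    rw [sum2] at this
    linarith
  · intro heq p hp hx
    rw [hD] at hp
    obtain ⟨x, y, hy, h1, h2⟩ := hp
    obtain ⟨k0⟩ := ‹Nonempty S›
    set c := g' k0 (xdec k0) with hc
    have htang : ∀ k, g k (xdec k) + c * (x k - xdec k) ≤ g k (x k) := by
      intro k
      have := tangent_le (hderiv k) (hstrict k).monotone (xdec k) (x k)
      rw [heq k k0] at this
      exact this
    rw [h2]
    calc ∑ k, lam k * g k (xdec k)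
        = ∑ k, lam k * g k (xdec k) + c * (p.1 - ∑ k, lam k * xdec k) := by
          rw [hx]; ring
      _ = ∑ k, (lam k * g k (xdec k) + lam k * (c * (x k - xdec k))) := by
          rw [h1, Finset.sum_add_distrib, ← Finset.sum_sub_distrib, Finset.mul_sum]
          congr 1
          apply Finset.sum_congr rfl
          intro k _
          ring
      _ ≤ ∑ k, lam k * y k := by
          apply Finset.sum_le_sum
          intro k _
          have := htang k
          have hyk := hy k
          nlinarith [(hlam_pos k).le, mul_le_mul_of_nonneg_left (le_trans this hyk) (hlam_pos k).le]
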